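/- arXiv:2008.10732 — 2 statements merged into one kernel-verified Lean document; each statement's English description precedes it below -/
import Mathlib

section
/- Let p be a prime, n ≥ 1, and fix integers 0 ≤ k_1 ≤ … ≤ k_n with multiplicities m_k = #{i : k_i = k}; let Σ = diag(p^{k_1}, …, p^{k_n}). Let C_Σ = GL_n(ℤ_p) ∩ Σ GL_n(ℤ_p) Σ^{−1}, i.e. the set of γ ∈ GL_n(ℤ_p) such that all entries of Σ^{−1} γ Σ (computed over ℚ_p) lie in ℤ_p; equivalently, γ ∈ GL_n(ℤ_p) with p^{k_i − k_j} dividing γ_{ij} for all i > j. Then μ(C_Σ) = p^{−D(Σ)} · ∏_{k≥0} π_{m_k}, where D(Σ) = ∑_{1 ≤ i < j ≤ n} (k_j − k_i). -/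
open MeasureTheory Matrix

instance matrixMeasurableSpace {m n α : Type*} [MeasurableSpace α] :
    MeasurableSpace (Matrix m n α) := MeasurableSpace.pi

/-- `π_j = ∏_{i=1}^j (1 − p^{−i})`, with `π_0 = 1`. -/
noncomputable def piReal (p j : ℕ) : ℝ := ∏ i ∈ Finset.range j, (1 - ((p : ℝ))⁻¹ ^ (i + 1))

open Finset
open scoped ENNReal





section counting

variable {p : ℕ} [hp : Fact p.Prime]

/-- fibers of a surjective additive hom all have the same cardinality. -/
lemma card_fiber_mul {A B : Type*} [AddCommGroup A] [AddCommGroup B] [Fintype A] [Fintype B]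
    (f : A →+ B) (hf : Function.Surjective f) (b : B) :
    Nat.card {a // f a = b} * Fintype.card B = Fintype.card A := by
  classical
  have key : ∀ c : B, Nat.card {a // f a = c} = Nat.card {a // f a = (0 : B)} := by
    intro c
    obtain ⟨a₀, ha₀⟩ := hf c
    refine Nat.card_congr ⟨fun x => ⟨x.1 - a₀, by simp [map_sub, x.2, ha₀]⟩,
      fun x => ⟨x.1 + a₀, by simp [map_add, x.2, ha₀]⟩, fun x => by simp, fun x => by simp⟩
  have htot : ∑ c : B, Nat.card {a // f a = c} = Fintype.card A := by
    have e := Equiv.sigmaFiberEquiv f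
    have := Fintype.card_congr e
    rw [Fintype.card_sigma] at this
    simpa [Nat.card_eq_fintype_card] using this
  rw [key b]
  calc Nat.card {a // f a = (0:B)} * Fintype.card B
      = ∑ _c : B, Nat.card {a // f a = (0:B)} := by
        rw [Finset.sum_const, card_univ, smul_eq_mul, mul_comm]
    _ = ∑ c : B, Nat.card {a // f a = c} := by
        exact Finset.sum_congr rfl fun c _ => (key c).symm
    _ = Fintype.card A := htot

lemma NeZero_ppow {N : ℕ} : NeZero (p ^ N) := ⟨pow_ne_zero N hp.out.ne_zero⟩

lemma card_fiber_castHom (N : ℕ) (hN : 1 ≤ N) (c : ZMod p) :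
    Nat.card {x : ZMod (p ^ N) // ZMod.castHom (dvd_pow_self p (Nat.one_le_iff_ne_zero.mp hN))
      (ZMod p) x = c} = p ^ (N - 1) := by
  haveI : NeZero (p ^ N) := NeZero_ppow
  haveI : NeZero p := ⟨hp.out.ne_zero⟩
  set f := ZMod.castHom (dvd_pow_self p (Nat.one_le_iff_ne_zero.mp hN)) (ZMod p) with hf
  have hsurj : Function.Surjective f.toAddMonoidHom := by
    intro c
    refine ⟨((c.val : ℕ) : ZMod (p ^ N)), ?_⟩
    show f _ = c
    rw [map_natCast]
    exact ZMod.natCast_rightInverse c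
  have h := card_fiber_mul f.toAddMonoidHom hsurj c
  have hc : Nat.card {x : ZMod (p ^ N) // f x = c} * Fintype.card (ZMod p)
      = Fintype.card (ZMod (p ^ N)) := h
  rw [ZMod.card, ZMod.card] at hc
  have hpow : p ^ N = p ^ (N - 1) * p := by
    rw [← pow_succ, Nat.sub_add_cancel hN]
  exact Nat.eq_of_mul_eq_mul_right hp.out.pos (hc.trans hpow)

lemma card_div_set (N d : ℕ) (hd : d ≤ N) :
    Nat.card {x : ZMod (p ^ N) // (p : ZMod (p ^ N)) ^ d ∣ x} = p ^ (N - d) := by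
  classical
  haveI : NeZero (p ^ N) := NeZero_ppow
  rw [Nat.card_eq_fintype_card, Fintype.card_subtype]
  have himg : Finset.univ.filter (fun x : ZMod (p ^ N) => (p : ZMod (p ^ N)) ^ d ∣ x) =
      Finset.image (fun m : Fin (p ^ (N - d)) => ((p ^ d * m : ℕ) : ZMod (p ^ N)))
        Finset.univ := by
    ext x
    simp only [Finset.mem_filter, Finset.mem_univ, true_and, Finset.mem_image]
    constructor
    · rintro ⟨y, rfl⟩
      refine ⟨⟨y.val % p ^ (N - d), Nat.mod_lt _ (pow_pos hp.out.pos _)⟩, ?_⟩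
      have hsplit : ∀ v : ℕ, p ^ d * (v % p ^ (N - d)) + p ^ N * (v / p ^ (N - d))
          = p ^ d * v := by
        intro v
        have hNe : p ^ N = p ^ d * p ^ (N - d) := by
          rw [← pow_add, Nat.add_sub_cancel' hd]
        rw [hNe, mul_assoc, ← Nat.mul_add, Nat.mod_add_div]
      have hzero : ((p ^ N : ℕ) : ZMod (p ^ N)) = 0 := ZMod.natCast_self _
      show ((p ^ d * (y.val % p ^ (N - d)) : ℕ) : ZMod (p ^ N)) = _
      calc ((p ^ d * (y.val % p ^ (N - d)) : ℕ) : ZMod (p ^ N))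
          = ((p ^ d * (y.val % p ^ (N - d)) + p ^ N * (y.val / p ^ (N - d)) : ℕ)
              : ZMod (p ^ N)) := by
            rw [Nat.cast_add, Nat.cast_mul (p ^ N), hzero, zero_mul, add_zero]
        _ = ((p ^ d * y.val : ℕ) : ZMod (p ^ N)) := by rw [hsplit]
        _ = (p : ZMod (p ^ N)) ^ d * y := by
            rw [Nat.cast_mul, Nat.cast_pow, ZMod.natCast_rightInverse y]
    · rintro ⟨m, rfl⟩
      refine ⟨((m : ℕ) : ZMod (p ^ N)), ?_⟩
      push_cast
      ring
  rw [himg, Finset.card_image_of_injective _ ?_, Finset.card_univ, Fintype.card_fin]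
  intro m₁ m₂ hm
  have := (ZMod.natCast_eq_natCast_iff _ _ _).mp hm
  have hlt : ∀ m : Fin (p ^ (N - d)), p ^ d * (m : ℕ) < p ^ N := by
    intro m
    calc p ^ d * (m : ℕ) < p ^ d * p ^ (N - d) :=
      (Nat.mul_lt_mul_left (pow_pos hp.out.pos _)).mpr m.2
    _ = p ^ N := by rw [← pow_add, Nat.add_sub_cancel' hd]
  have heq : p ^ d * (m₁ : ℕ) = p ^ d * (m₂ : ℕ) := by
    have h1 := Nat.mod_eq_of_lt (hlt m₁)
    have h2 := Nat.mod_eq_of_lt (hlt m₂)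
    rwa [Nat.ModEq, h1, h2] at this
  exact Fin.ext (Nat.eq_of_mul_eq_mul_left (pow_pos hp.out.pos _) heq)

/-- counting a condition pulled back through a map with constant fibers. -/
lemma card_comp {α β : Type*} [Fintype α] [Fintype β] (g : α → β) (P : β → Prop) (c : ℕ)
    (hfib : ∀ b : β, Nat.card {a // g a = b} = c) :
    Nat.card {a // P (g a)} = Nat.card {b // P b} * c := by
  classical
  rw [Nat.card_eq_fintype_card, Fintype.card_subtype]
  have hmaps : ∀ a ∈ Finset.univ.filter fun a => P (g a), g a ∈ Finset.univ.filter P := by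
    intro a ha
    simp only [Finset.mem_filter, Finset.mem_univ, true_and] at ha ⊢
    exact ha
  rw [Finset.card_eq_sum_card_fiberwise hmaps]
  have hfib' : ∀ b ∈ Finset.univ.filter P,
      ((Finset.univ.filter fun a => P (g a)).filter fun a => g a = b).card = c := by
    intro b hb
    simp only [Finset.mem_filter, Finset.mem_univ, true_and] at hb
    have : ((Finset.univ.filter fun a => P (g a)).filter fun a => g a = b) =
        Finset.univ.filter fun a => g a = b := by
      ext a
      simp only [Finset.mem_filter, Finset.mem_univ, true_and, and_iff_right_iff_imp]
      rintro rfl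
      exact hb
    rw [this, ← Fintype.card_subtype, ← Nat.card_eq_fintype_card, hfib]
  rw [Finset.sum_congr rfl hfib', Finset.sum_const, smul_eq_mul]
  congr 1
  rw [Nat.card_eq_fintype_card, Fintype.card_subtype]

lemma card_isUnit_det (ι : Type*) [Fintype ι] [DecidableEq ι] :
    Nat.card {A : Matrix ι ι (ZMod p) // IsUnit A.det} =
      ∏ i ∈ Finset.range (Fintype.card ι), (p ^ (Fintype.card ι) - p ^ i) := by
  haveI : NeZero p := ⟨hp.out.ne_zero⟩
  have e1 : {A : Matrix ι ι (ZMod p) // IsUnit A.det} ≃ (Matrix ι ι (ZMod p))ˣ :=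
    { toFun := fun x => ((Matrix.isUnit_iff_isUnit_det x.1).mpr x.2).unit
      invFun := fun u => ⟨u.1, (Matrix.isUnit_iff_isUnit_det _).mp u.isUnit⟩
      left_inv := fun x => Subtype.ext rfl
      right_inv := fun u => Units.ext rfl }
  let em := Fintype.equivFin ι
  have e2 : (Matrix ι ι (ZMod p))ˣ ≃ (Matrix (Fin (Fintype.card ι)) (Fin (Fintype.card ι))
      (ZMod p))ˣ :=
    (Units.mapEquiv (Matrix.reindexAlgEquiv (ZMod p) (ZMod p) em).toMulEquiv).toEquiv
  rw [Nat.card_congr (e1.trans e2)]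
  have := Matrix.card_GL_field (𝔽 := ZMod p) (Fintype.card ι)
  rw [ZMod.card] at this
  rw [show ((Matrix (Fin (Fintype.card ι)) (Fin (Fintype.card ι)) (ZMod p))ˣ) =
    GL (Fin (Fintype.card ι)) (ZMod p) from rfl, this]
  rw [← Fin.prod_univ_eq_prod_range]

lemma card_matrix_fiber (N : ℕ) (hN : 1 ≤ N) (ι : Type*) [Fintype ι] [DecidableEq ι]
    (A₀ : Matrix ι ι (ZMod p)) :
    Nat.card {A : Matrix ι ι (ZMod (p ^ N)) //
        A.map (ZMod.castHom (dvd_pow_self p (Nat.one_le_iff_ne_zero.mp hN)) (ZMod p)) = A₀} =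
      (p ^ (N - 1)) ^ (Fintype.card ι * Fintype.card ι) := by
  classical
  set f := ZMod.castHom (dvd_pow_self p (Nat.one_le_iff_ne_zero.mp hN)) (ZMod p) with hf
  have e1 : {A : Matrix ι ι (ZMod (p ^ N)) // A.map f = A₀} ≃
      {A : Matrix ι ι (ZMod (p ^ N)) // ∀ i, ∀ j, f (A i j) = A₀ i j} :=
    Equiv.subtypeEquivRight (fun A => by
      constructor
      · intro h i j; rw [← h]; rfl
      · intro h; ext i j; exact h i j)
  have e2 : {A : Matrix ι ι (ZMod (p ^ N)) // ∀ i, ∀ j, f (A i j) = A₀ i j} ≃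
      Π i : ι, {r : ι → ZMod (p ^ N) // ∀ j, f (r j) = A₀ i j} :=
    (Equiv.subtypeEquiv (Matrix.of.symm : Matrix ι ι (ZMod (p ^ N)) ≃ (ι → ι → ZMod (p ^ N)))
      (fun A => Iff.rfl)).trans
      (Equiv.subtypePiEquivPi (p := fun i (r : ι → ZMod (p ^ N)) => ∀ j, f (r j) = A₀ i j))
  have e3 : (Π i : ι, {r : ι → ZMod (p ^ N) // ∀ j, f (r j) = A₀ i j}) ≃
      Π i : ι, Π j : ι, {x : ZMod (p ^ N) // f x = A₀ i j} :=
    Equiv.piCongrRight (fun i =>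
      Equiv.subtypePiEquivPi (p := fun j (x : ZMod (p ^ N)) => f x = A₀ i j))
  rw [Nat.card_congr ((e1.trans e2).trans e3), Nat.card_pi]
  have : ∀ i : ι, Nat.card (Π j : ι, {x : ZMod (p ^ N) // f x = A₀ i j}) =
      (p ^ (N - 1)) ^ (Fintype.card ι) := by
    intro i
    rw [Nat.card_pi]
    rw [Finset.prod_congr rfl (fun j _ => card_fiber_castHom N hN (A₀ i j)),
      Finset.prod_const, Finset.card_univ]
  rw [Finset.prod_congr rfl (fun i _ => this i), Finset.prod_const, Finset.card_univ,
    ← pow_mul]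

lemma card_block (N : ℕ) (hN : 1 ≤ N) (ι : Type*) [Fintype ι] [DecidableEq ι] :
    Nat.card {A : Matrix ι ι (ZMod (p ^ N)) //
        IsUnit ((A.map (ZMod.castHom (dvd_pow_self p (Nat.one_le_iff_ne_zero.mp hN))
          (ZMod p))).det)} =
      (∏ i ∈ Finset.range (Fintype.card ι), (p ^ (Fintype.card ι) - p ^ i)) *
        (p ^ (N - 1)) ^ (Fintype.card ι * Fintype.card ι) := by
  rw [card_comp (fun A : Matrix ι ι (ZMod (p ^ N)) =>
      A.map (ZMod.castHom (dvd_pow_self p (Nat.one_le_iff_ne_zero.mp hN)) (ZMod p)))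
    (fun B => IsUnit B.det) ((p ^ (N - 1)) ^ (Fintype.card ι * Fintype.card ι))
    (card_matrix_fiber N hN ι), card_isUnit_det]

end counting

section decomp

variable {n : ℕ} (k : Fin n → ℕ) (R : Type*)

/-- decomposition of a matrix into diagonal square blocks (along the level sets of `k`),
strictly lower cross-block entries and strictly upper cross-block entries. -/
def matrixDecomp :
    Matrix (Fin n) (Fin n) R ≃
      (Π t : (Finset.univ.image k : Finset ℕ), Matrix {i // k i = t.1} {i // k i = t.1} R) ×
      (Π _q : {q : Fin n × Fin n // k q.2 < k q.1}, R) ×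
      (Π _q : {q : Fin n × Fin n // k q.1 < k q.2}, R) where
  toFun A := (fun t => A.toSquareBlock k t.1, fun q => A q.1.1 q.1.2, fun q => A q.1.1 q.1.2)
  invFun y := fun i j =>
    if h : k i = k j then
      y.1 ⟨k i, Finset.mem_image_of_mem k (Finset.mem_univ i)⟩ ⟨i, rfl⟩ ⟨j, h.symm⟩
    else if h2 : k j < k i then y.2.1 ⟨(i, j), h2⟩
    else y.2.2 ⟨(i, j), lt_of_le_of_ne (not_lt.mp h2) h⟩
  left_inv A := by
    funext i j
    dsimp only
    by_cases h : k i = k j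
    · rw [dif_pos h]; rfl
    · by_cases h2 : k j < k i
      · rw [dif_neg h, dif_pos h2]
      · rw [dif_neg h, dif_neg h2]
  right_inv y := by
    obtain ⟨a, b, c⟩ := y
    refine Prod.ext ?_ (Prod.ext ?_ ?_)
    · funext t
      obtain ⟨t, ht⟩ := t
      funext i j
      obtain ⟨i, hi⟩ := i
      obtain ⟨j, hj⟩ := j
      dsimp only at hi hj
      subst hi
      show (if h : k i = k j then _ else _) = _
      rw [dif_pos hj.symm]
    · funext q
      obtain ⟨⟨i, j⟩, hq⟩ := q
      show (if h : k i = k j then _ else _) = _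
      rw [dif_neg (ne_of_gt hq), dif_pos hq]
    · funext q
      obtain ⟨⟨i, j⟩, hq⟩ := q
      show (if h : k i = k j then _ else _) = _
      rw [dif_neg (ne_of_lt hq), dif_neg (lt_asymm hq)]

end decomp





section padic

variable {p : ℕ} [hp : Fact p.Prime]

lemma NeZero_ppow' {N : ℕ} : NeZero (p ^ N) := ⟨pow_ne_zero N hp.out.ne_zero⟩

lemma isUnit_zmodpow_iff (N : ℕ) (hN : 1 ≤ N) (x : ZMod (p ^ N)) :
    IsUnit x ↔ IsUnit (ZMod.castHom (dvd_pow_self p (Nat.one_le_iff_ne_zero.mp hN))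
      (ZMod p) x) := by
  haveI : NeZero (p ^ N) := NeZero_ppow'
  haveI : NeZero p := ⟨hp.out.ne_zero⟩
  have hx : x = ((x.val : ℕ) : ZMod (p ^ N)) := (ZMod.natCast_rightInverse x).symm
  rw [hx, map_natCast, ZMod.isUnit_iff_coprime, ZMod.isUnit_iff_coprime,
    Nat.coprime_pow_right_iff hN]

lemma isUnit_padic_iff (N : ℕ) (hN : 1 ≤ N) (x : ℤ_[p]) :
    IsUnit x ↔ IsUnit (PadicInt.toZModPow N x) := by
  constructor
  · exact fun h => h.map _
  · intro h
    by_contra hx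
    have hmem : x ∈ IsLocalRing.maximalIdeal ℤ_[p] := by
      rw [IsLocalRing.mem_maximalIdeal]; exact hx
    rw [PadicInt.maximalIdeal_eq_span_p, Ideal.mem_span_singleton] at hmem
    have hdvd : (p : ZMod (p ^ N)) ∣ PadicInt.toZModPow N x := by
      obtain ⟨y, rfl⟩ := hmem
      exact ⟨PadicInt.toZModPow N y, by rw [_root_.map_mul, map_natCast]⟩
    have hpu : IsUnit (p : ZMod (p ^ N)) := isUnit_of_dvd_unit hdvd h
    rw [isUnit_zmodpow_iff N hN, map_natCast, ZMod.natCast_self] at hpu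
    exact zero_ne_one (isUnit_zero_iff.mp hpu)

lemma dvd_toZModPow_iff (N d : ℕ) (hd : d ≤ N) (x : ℤ_[p]) :
    (p : ℤ_[p]) ^ d ∣ x ↔ (p : ZMod (p ^ N)) ^ d ∣ PadicInt.toZModPow N x := by
  haveI : NeZero (p ^ N) := NeZero_ppow'
  constructor
  · rintro ⟨y, rfl⟩
    exact ⟨PadicInt.toZModPow N y, by rw [_root_.map_mul, map_pow, map_natCast]⟩
  · rintro ⟨y, hy⟩
    obtain ⟨z, rfl⟩ : ∃ z : ℤ_[p], PadicInt.toZModPow N z = y :=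
      ⟨((y.val : ℕ) : ℤ_[p]), by rw [map_natCast]; exact ZMod.natCast_rightInverse y⟩
    have hker : PadicInt.toZModPow N (x - (p : ℤ_[p]) ^ d * z) = 0 := by
      rw [map_sub, _root_.map_mul, map_pow, map_natCast, hy, sub_self]
    rw [← RingHom.mem_ker, PadicInt.ker_toZModPow, Ideal.mem_span_singleton] at hker
    obtain ⟨w, hw⟩ : (p : ℤ_[p]) ^ d ∣ x - (p : ℤ_[p]) ^ d * z :=
      dvd_trans (pow_dvd_pow _ hd) hker
    exact ⟨z + w, by rw [mul_add, ← hw]; ring⟩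

lemma toZModPow_preimage_eq_ball (N : ℕ) (a : ZMod (p ^ N)) :
    (PadicInt.toZModPow (p := p) N) ⁻¹' {a} =
      Metric.closedBall ((a.val : ℕ) : ℤ_[p]) ((p : ℝ) ^ (-(N : ℤ))) := by
  haveI : NeZero (p ^ N) := NeZero_ppow'
  ext x
  simp only [Set.mem_preimage, Set.mem_singleton_iff, Metric.mem_closedBall, dist_eq_norm]
  rw [PadicInt.norm_le_pow_iff_mem_span_pow, ← PadicInt.ker_toZModPow, RingHom.mem_ker,
    map_sub, map_natCast, sub_eq_zero]
  have : ((a.val : ℕ) : ZMod (p ^ N)) = a := ZMod.natCast_rightInverse a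
  rw [this]

variable [MeasurableSpace ℤ_[p]] [BorelSpace ℤ_[p]]

lemma measure_toZModPow_fiber (ν : Measure ℤ_[p]) [ν.IsAddHaarMeasure] [IsProbabilityMeasure ν]
    (N : ℕ) (a : ZMod (p ^ N)) :
    ν ((PadicInt.toZModPow (p := p) N) ⁻¹' {a}) = ((p : ℝ≥0∞) ^ N)⁻¹ := by
  haveI : NeZero (p ^ N) := NeZero_ppow'
  have hmeas : ∀ b : ZMod (p ^ N), MeasurableSet ((PadicInt.toZModPow (p := p) N) ⁻¹' {b}) := by
    intro b
    rw [toZModPow_preimage_eq_ball]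
    exact measurableSet_closedBall
  have htrans : ∀ b : ZMod (p ^ N), ν ((PadicInt.toZModPow (p := p) N) ⁻¹' {b}) =
      ν ((PadicInt.toZModPow (p := p) N) ⁻¹' {0}) := by
    intro b
    have hre : (PadicInt.toZModPow (p := p) N) ⁻¹' {b} =
        (fun x => (((-b).val : ℕ) : ℤ_[p]) + x) ⁻¹' ((PadicInt.toZModPow (p := p) N) ⁻¹' {0}) := by
      ext x
      simp only [Set.mem_preimage, Set.mem_singleton_iff, map_add, map_natCast]
      have : (((-b).val : ℕ) : ZMod (p ^ N)) = -b := ZMod.natCast_rightInverse (-b)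
      rw [this]
      constructor
      · intro h; rw [h]; ring
      · intro h; linear_combination h
    rw [hre, measure_preimage_add]
  have hunion : (Set.univ : Set ℤ_[p]) = ⋃ b : ZMod (p ^ N),
      (PadicInt.toZModPow (p := p) N) ⁻¹' {b} := by
    ext x
    simp only [Set.mem_univ, Set.mem_iUnion, Set.mem_preimage, Set.mem_singleton_iff, true_iff]
    exact ⟨_, rfl⟩
  have hdisj : Pairwise (Function.onFun Disjoint
      fun b : ZMod (p ^ N) => (PadicInt.toZModPow (p := p) N) ⁻¹' {b}) := by
    intro b c hbc
    rw [Function.onFun, Set.disjoint_left]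
    rintro x hxb hxc
    exact hbc (hxb.symm.trans hxc)
  have hsum : (Fintype.card (ZMod (p ^ N)) : ℝ≥0∞) *
      ν ((PadicInt.toZModPow (p := p) N) ⁻¹' {0}) = 1 := by
    have h1 : ν (Set.univ : Set ℤ_[p]) = 1 := measure_univ
    rw [hunion, measure_iUnion hdisj hmeas, tsum_fintype] at h1
    rw [← h1, Finset.sum_congr rfl fun b _ => htrans b, Finset.sum_const, card_univ,
      nsmul_eq_mul]
  rw [ZMod.card, Nat.cast_pow] at hsum
  have hpne : ((p : ℝ≥0∞) ^ N) ≠ 0 := pow_ne_zero _ (by simp [hp.out.ne_zero])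
  have hptop : ((p : ℝ≥0∞) ^ N) ≠ ⊤ := ENNReal.pow_ne_top (by simp)
  have h0 : ν ((PadicInt.toZModPow (p := p) N) ⁻¹' {0}) = ((p : ℝ≥0∞) ^ N)⁻¹ := by
    have h2 := congrArg (fun z => ((p : ℝ≥0∞) ^ N)⁻¹ * z) hsum
    rwa [← mul_assoc, ENNReal.inv_mul_cancel hpne hptop, one_mul, mul_one] at h2
  rw [htrans a, h0]

end padic
section condition

variable {p : ℕ} [hp : Fact p.Prime] {n : ℕ}

lemma cond_iff (k : Fin n → ℕ) (hk : Monotone k) (N : ℕ) (hN : 1 ≤ N)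
    (A : Matrix (Fin n) (Fin n) (ZMod (p ^ N))) :
    (IsUnit A.det ∧ ∀ i j : Fin n, j < i → (p : ZMod (p ^ N)) ^ (k i - k j) ∣ A i j) ↔
      ((∀ t ∈ Finset.univ.image k, IsUnit ((A.toSquareBlock k t).map
          (ZMod.castHom (dvd_pow_self p (Nat.one_le_iff_ne_zero.mp hN)) (ZMod p))).det) ∧
        ∀ i j : Fin n, k j < k i → (p : ZMod (p ^ N)) ^ (k i - k j) ∣ A i j) := by
  set π := ZMod.castHom (dvd_pow_self p (Nat.one_le_iff_ne_zero.mp hN)) (ZMod p) with hπ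
  have hlow : (∀ i j : Fin n, j < i → (p : ZMod (p ^ N)) ^ (k i - k j) ∣ A i j) ↔
      (∀ i j : Fin n, k j < k i → (p : ZMod (p ^ N)) ^ (k i - k j) ∣ A i j) := by
    constructor
    · intro h i j hkji
      refine h i j ?_
      by_contra hij
      exact absurd (hk (not_lt.mp hij)) (not_le.mpr hkji)
    · intro h i j hji
      rcases lt_or_ge (k j) (k i) with hlt | hge
      · exact h i j hlt
      · rw [Nat.sub_eq_zero_of_le hge, pow_zero]
        exact one_dvd _
  have detIff : (∀ i j : Fin n, k j < k i → (p : ZMod (p ^ N)) ^ (k i - k j) ∣ A i j) →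
      (IsUnit A.det ↔ ∀ t ∈ Finset.univ.image k,
        IsUnit ((A.toSquareBlock k t).map π).det) := by
    intro hdiv
    have hbt : (A.map π).BlockTriangular k := by
      intro i j hij
      show π (A i j) = 0
      obtain ⟨y, hy⟩ := hdiv i j hij
      rw [hy, _root_.map_mul, map_pow, map_natCast, ZMod.natCast_self, zero_pow, zero_mul]
      omega
    have hsb : ∀ t, (A.map π).toSquareBlock k t = (A.toSquareBlock k t).map π := fun t => rfl
    calc IsUnit A.det ↔ IsUnit (π A.det) := isUnit_zmodpow_iff N hN _
      _ ↔ IsUnit (A.map π).det := by rw [RingHom.map_det]; rfl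
      _ ↔ ∀ t ∈ Finset.univ.image k, IsUnit ((A.toSquareBlock k t).map π).det := by
          rw [hbt.det, isUnit_iff_ne_zero, Finset.prod_ne_zero_iff]
          refine forall₂_congr fun t _ => ?_
          rw [hsb t, isUnit_iff_ne_zero]
  constructor
  · rintro ⟨hdet, hdiv⟩
    have hdiv' := hlow.mp hdiv
    exact ⟨(detIff hdiv').mp hdet, hdiv'⟩
  · rintro ⟨hblk, hdiv'⟩
    exact ⟨(detIff hdiv').mpr hblk, hlow.mpr hdiv'⟩

lemma card_T (k : Fin n → ℕ) (hk : Monotone k) (N : ℕ) (hN : 1 ≤ N) (hNk : ∀ i, k i < N) :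
    Nat.card {A : Matrix (Fin n) (Fin n) (ZMod (p ^ N)) //
        IsUnit A.det ∧ ∀ i j : Fin n, j < i → (p : ZMod (p ^ N)) ^ (k i - k j) ∣ A i j} =
      (∏ t ∈ Finset.range N,
        ((∏ i ∈ Finset.range ((Finset.univ.filter fun i => k i = t).card),
            (p ^ ((Finset.univ.filter fun i => k i = t).card) - p ^ i)) *
          (p ^ (N - 1)) ^ ((Finset.univ.filter fun i => k i = t).card *
            (Finset.univ.filter fun i => k i = t).card))) *
      (∏ q ∈ Finset.univ.filter (fun q : Fin n × Fin n => k q.2 < k q.1),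
        p ^ (N - (k q.1 - k q.2))) *
      (p ^ N) ^ ((Finset.univ.filter (fun q : Fin n × Fin n => k q.1 < k q.2)).card) := by
  classical
  haveI : NeZero (p ^ N) := NeZero_ppow'
  set π := ZMod.castHom (dvd_pow_self p (Nat.one_le_iff_ne_zero.mp hN)) (ZMod p) with hπ
  -- step 1: replace the condition using cond_iff
  have e0 := Equiv.subtypeEquivRight (fun A : Matrix (Fin n) (Fin n) (ZMod (p ^ N)) => cond_iff k hk N hN A)
  -- step 2: transfer along matrixDecomp
  have e1 := Equiv.subtypeEquiv (matrixDecomp k (ZMod (p ^ N))) (p := fun A =>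
      (∀ t ∈ Finset.univ.image k, IsUnit ((A.toSquareBlock k t).map π).det) ∧
        ∀ i j : Fin n, k j < k i → (p : ZMod (p ^ N)) ^ (k i - k j) ∣ A i j)
    (q := fun y => (∀ t : (Finset.univ.image k : Finset ℕ), IsUnit ((y.1 t).map π).det) ∧
      ((∀ q : {q : Fin n × Fin n // k q.2 < k q.1},
          (p : ZMod (p ^ N)) ^ (k q.1.1 - k q.1.2) ∣ y.2.1 q) ∧ True))
    (fun A => by
      constructor
      · rintro ⟨h1, h2⟩
        exact ⟨fun t => h1 t.1 t.2, fun q => h2 q.1.1 q.1.2 q.2, trivial⟩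
      · rintro ⟨h1, h2, -⟩
        exact ⟨fun t ht => h1 ⟨t, ht⟩, fun i j hij => h2 ⟨(i, j), hij⟩⟩)
  have e2 := Equiv.subtypeProdEquivProd
    (p := fun a : Π t : (Finset.univ.image k : Finset ℕ),
        Matrix {i // k i = t.1} {i // k i = t.1} (ZMod (p ^ N)) => ∀ t, IsUnit ((a t).map π).det)
    (q := fun z : (Π _q : {q : Fin n × Fin n // k q.2 < k q.1}, ZMod (p ^ N)) ×
        (Π _q : {q : Fin n × Fin n // k q.1 < k q.2}, ZMod (p ^ N)) =>
      (∀ q : {q : Fin n × Fin n // k q.2 < k q.1}, (p : ZMod (p ^ N)) ^ (k q.1.1 - k q.1.2) ∣ z.1 q) ∧ True)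
  have e3 := Equiv.subtypeProdEquivProd
    (p := fun b : Π _q : {q : Fin n × Fin n // k q.2 < k q.1}, ZMod (p ^ N) =>
      ∀ q : {q : Fin n × Fin n // k q.2 < k q.1}, (p : ZMod (p ^ N)) ^ (k q.1.1 - k q.1.2) ∣ b q)
    (q := fun _c : Π _q : {q : Fin n × Fin n // k q.1 < k q.2}, ZMod (p ^ N) => True)
  have e4 := Equiv.subtypePiEquivPi (p := fun (t : (Finset.univ.image k : Finset ℕ))
    (Bm : Matrix {i // k i = t.1} {i // k i = t.1} (ZMod (p ^ N))) => IsUnit (Bm.map π).det)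
  have e5 := Equiv.subtypePiEquivPi (p := fun (q : {q : Fin n × Fin n // k q.2 < k q.1})
    (x : ZMod (p ^ N)) => (p : ZMod (p ^ N)) ^ (k q.1.1 - k q.1.2) ∣ x)
  have e6 := Equiv.subtypeUnivEquiv
    (p := fun _c : Π _q : {q : Fin n × Fin n // k q.1 < k q.2}, ZMod (p ^ N) => True) (fun _ => trivial)
  rw [Nat.card_congr (((((e0.trans e1).trans e2).trans
    (Equiv.prodCongr e4 (e3.trans (Equiv.prodCongr e5 e6)))))),
    Nat.card_prod, Nat.card_prod, Nat.card_pi, Nat.card_pi, Nat.card_pi, ← mul_assoc]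
  congr 1
  · congr 1
    -- blocks
    · have hstep : ∀ t : (Finset.univ.image k : Finset ℕ),
          Nat.card {Bm : Matrix {i // k i = t.1} {i // k i = t.1} (ZMod (p ^ N)) // IsUnit (Bm.map π).det} =
          (∏ i ∈ Finset.range ((Finset.univ.filter fun i => k i = t.1).card),
            (p ^ ((Finset.univ.filter fun i => k i = t.1).card) - p ^ i)) *
          (p ^ (N - 1)) ^ ((Finset.univ.filter fun i => k i = t.1).card *
            (Finset.univ.filter fun i => k i = t.1).card) := by
        intro t
        rw [card_block N hN {i // k i = t.1}]
        have hcard : Fintype.card {i // k i = t.1} =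
            (Finset.univ.filter fun i => k i = t.1).card := Fintype.card_subtype _
        rw [hcard]
      rw [Finset.prod_congr rfl (fun t _ => hstep t)]
      have hsub : Finset.univ.image k ⊆ Finset.range N := by
        intro t ht
        obtain ⟨i, _, rfl⟩ := Finset.mem_image.mp ht
        exact Finset.mem_range.mpr (hNk i)
      have hone : ∀ t ∈ Finset.range N, t ∉ Finset.univ.image k →
          (∏ i ∈ Finset.range ((Finset.univ.filter fun i => k i = t).card),
            (p ^ ((Finset.univ.filter fun i => k i = t).card) - p ^ i)) *
          (p ^ (N - 1)) ^ ((Finset.univ.filter fun i => k i = t).card *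
            (Finset.univ.filter fun i => k i = t).card) = 1 := by
        intro t _ hnt
        have hempty : (Finset.univ.filter fun i => k i = t) = ∅ := by
          rw [Finset.filter_eq_empty_iff]
          intro i _
          exact fun hit => hnt (Finset.mem_image.mpr ⟨i, Finset.mem_univ i, hit⟩)
        rw [hempty]
        simp
      refine Finset.prod_bij (fun (t : {x // x ∈ Finset.univ.image k}) _ => (t : ℕ))
        (fun t _ => t.2) (fun a _ b _ h => Subtype.ext h)
        (fun b hb => ⟨⟨b, hb⟩, Finset.mem_univ _, rfl⟩) (fun t _ => rfl) |>.trans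
        (Finset.prod_subset hsub hone)
    -- lower entries
    · have hstep : ∀ q : {q : Fin n × Fin n // k q.2 < k q.1},
          Nat.card {x : ZMod (p ^ N) // (p : ZMod (p ^ N)) ^ (k q.1.1 - k q.1.2) ∣ x} =
            p ^ (N - (k q.1.1 - k q.1.2)) := by
        intro q
        exact card_div_set N _ (le_of_lt (lt_of_le_of_lt (Nat.sub_le _ _) (hNk _)))
      rw [Finset.prod_congr rfl (fun q _ => hstep q)]
      exact Finset.prod_bij (fun (q : {q : Fin n × Fin n // k q.2 < k q.1}) _ =>
          (q : Fin n × Fin n))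
        (fun q _ => Finset.mem_filter.mpr ⟨Finset.mem_univ _, q.2⟩)
        (fun a _ b _ h => Subtype.ext h)
        (fun b hb => ⟨⟨b, (Finset.mem_filter.mp hb).2⟩, Finset.mem_univ _, rfl⟩)
        (fun q _ => rfl)
    -- upper entries
  · have : ∀ _q : {q : Fin n × Fin n // k q.1 < k q.2}, Nat.card (ZMod (p ^ N)) = p ^ N := by
      intro _q
      rw [Nat.card_eq_fintype_card, ZMod.card]
    rw [Finset.prod_congr rfl (fun q _ => this q), Finset.prod_const, Finset.card_univ]
    congr 1
    exact Fintype.card_subtype _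

end condition
section final

lemma key_real {p : ℕ} (hp : Fact p.Prime) (m : ℕ) :
    ((∏ i ∈ Finset.range m, (p ^ m - p ^ i) : ℕ) : ℝ) = piReal p m * (p : ℝ) ^ (m * m) := by
  have hp1 : 1 ≤ p := hp.out.one_lt.le
  have hPne : (p : ℝ) ≠ 0 := Nat.cast_ne_zero.mpr hp.out.ne_zero
  have h1 : ((∏ i ∈ Finset.range m, (p ^ m - p ^ i) : ℕ) : ℝ) =
      ∏ i ∈ Finset.range m, ((p : ℝ) ^ m - (p : ℝ) ^ i) := by
    rw [Nat.cast_prod]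
    refine Finset.prod_congr rfl fun i hi => ?_
    rw [Nat.cast_sub (Nat.pow_le_pow_right hp1 (le_of_lt (Finset.mem_range.mp hi)))]
    push_cast
    ring
  rw [h1, ← Finset.prod_range_reflect]
  have h2 : ∀ i ∈ Finset.range m, (p : ℝ) ^ m - (p : ℝ) ^ (m - 1 - i) =
      (1 - ((p : ℝ))⁻¹ ^ (i + 1)) * (p : ℝ) ^ m := by
    intro i hi
    have him : i + 1 ≤ m := Finset.mem_range.mp hi
    have hsplit : (p : ℝ) ^ m = (p : ℝ) ^ (i + 1) * (p : ℝ) ^ (m - 1 - i) := by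
      rw [← pow_add]
      congr 1
      omega
    rw [sub_mul, one_mul]
    congr 1
    rw [hsplit, ← mul_assoc, inv_pow, inv_mul_cancel₀ (pow_ne_zero _ hPne), one_mul]
  rw [Finset.prod_congr rfl h2, Finset.prod_mul_distrib, Finset.prod_const, Finset.card_range,
    ← pow_mul, piReal]

lemma swap_sum {n : ℕ} (k : Fin n → ℕ) (hk : Monotone k) :
    ∑ q ∈ Finset.univ.filter (fun q : Fin n × Fin n => q.1 < q.2), (k q.2 - k q.1) =
      ∑ q ∈ Finset.univ.filter (fun q : Fin n × Fin n => k q.2 < k q.1), (k q.1 - k q.2) := by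
  classical
  have h1 : ∑ q ∈ Finset.univ.filter (fun q : Fin n × Fin n => q.1 < q.2), (k q.2 - k q.1) =
      ∑ q ∈ Finset.univ.filter (fun q : Fin n × Fin n => k q.1 < k q.2), (k q.2 - k q.1) := by
    refine (Finset.sum_subset (fun q hq => ?_) (fun q hq hnq => ?_)).symm
    · simp only [Finset.mem_filter, Finset.mem_univ, true_and] at hq ⊢
      by_contra hle
      exact absurd (hk (not_lt.mp hle)) (not_le.mpr hq)
    · simp only [Finset.mem_filter, Finset.mem_univ, true_and] at hq hnq
      exact Nat.sub_eq_zero_of_le (not_lt.mp hnq)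
  rw [h1]
  refine Finset.sum_bij (fun q _ => Prod.swap q) ?_ ?_ ?_ ?_
  · intro q hq
    simp only [Finset.mem_filter, Finset.mem_univ, true_and] at hq ⊢
    exact hq
  · intro a _ b _ h
    exact Prod.swap_injective h
  · intro b hb
    simp only [Finset.mem_filter, Finset.mem_univ, true_and] at hb
    exact ⟨Prod.swap b, by simp only [Finset.mem_filter, Finset.mem_univ, true_and,
      Prod.fst_swap, Prod.snd_swap]; exact hb, by simp⟩
  · intro q _
    rfl

lemma partition_card {n N : ℕ} (k : Fin n → ℕ) (hNk : ∀ i, k i < N) :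
    (∑ t ∈ Finset.range N, (Finset.univ.filter fun i => k i = t).card *
        (Finset.univ.filter fun i => k i = t).card) +
      (Finset.univ.filter (fun q : Fin n × Fin n => k q.2 < k q.1)).card +
      (Finset.univ.filter (fun q : Fin n × Fin n => k q.1 < k q.2)).card = n * n := by
  classical
  have h1 : (Finset.univ.filter (fun q : Fin n × Fin n => k q.1 = k q.2)).card =
      ∑ t ∈ Finset.range N, (Finset.univ.filter fun i => k i = t).card *
        (Finset.univ.filter fun i => k i = t).card := by
    rw [Finset.card_eq_sum_card_fiberwise (f := fun q : Fin n × Fin n => k q.1)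
      (t := Finset.range N) (fun q _ => Finset.mem_range.mpr (hNk q.1))]
    refine Finset.sum_congr rfl fun t _ => ?_
    have hset : ((Finset.univ.filter (fun q : Fin n × Fin n => k q.1 = k q.2)).filter
        (fun q => k q.1 = t)) =
        (Finset.univ.filter fun i => k i = t) ×ˢ (Finset.univ.filter fun i => k i = t) := by
      ext q
      simp only [Finset.mem_filter, Finset.mem_univ, true_and, Finset.mem_product]
      omega
    rw [hset, Finset.card_product]
  have h2 : (Finset.univ.filter (fun q : Fin n × Fin n => ¬ k q.1 = k q.2)) =
      (Finset.univ.filter (fun q : Fin n × Fin n => k q.2 < k q.1)) ∪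
      (Finset.univ.filter (fun q : Fin n × Fin n => k q.1 < k q.2)) := by
    ext q
    simp only [Finset.mem_filter, Finset.mem_univ, true_and, Finset.mem_union]
    omega
  have hdisj : Disjoint (Finset.univ.filter (fun q : Fin n × Fin n => k q.2 < k q.1))
      (Finset.univ.filter (fun q : Fin n × Fin n => k q.1 < k q.2)) := by
    rw [Finset.disjoint_left]
    intro q hq hq'
    simp only [Finset.mem_filter, Finset.mem_univ, true_and] at hq hq'
    omega
  have h3 := Finset.card_filter_add_card_filter_not
    (s := (Finset.univ : Finset (Fin n × Fin n))) (p := fun q => k q.1 = k q.2)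
  rw [Finset.card_univ, Fintype.card_prod, Fintype.card_fin] at h3
  rw [h2, Finset.card_union_of_disjoint hdisj] at h3
  omega

end final
lemma final_real {p : ℕ} (hp : Fact p.Prime) {n : ℕ} (k : Fin n → ℕ) (hk : Monotone k)
    (N : ℕ) (hN : 1 ≤ N) (hNk : ∀ i, k i < N) :
    (((∏ t ∈ Finset.range N,
        ((∏ i ∈ Finset.range ((Finset.univ.filter fun i => k i = t).card),
            (p ^ ((Finset.univ.filter fun i => k i = t).card) - p ^ i)) *
          (p ^ (N - 1)) ^ ((Finset.univ.filter fun i => k i = t).card *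
            (Finset.univ.filter fun i => k i = t).card))) *
      (∏ q ∈ Finset.univ.filter (fun q : Fin n × Fin n => k q.2 < k q.1),
        p ^ (N - (k q.1 - k q.2))) *
      (p ^ N) ^ ((Finset.univ.filter (fun q : Fin n × Fin n => k q.1 < k q.2)).card) : ℕ) : ℝ) *
      ((((p : ℝ)) ^ N)⁻¹) ^ (n * n) =
    ((p : ℝ))⁻¹ ^ (∑ q ∈ Finset.univ.filter (fun q : Fin n × Fin n => q.1 < q.2),
        (k q.2 - k q.1)) *
      ∏ t ∈ Finset.range N, piReal p ((Finset.univ.filter fun i => k i = t).card) := by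
  classical
  have hPne : (p : ℝ) ≠ 0 := Nat.cast_ne_zero.mpr hp.out.ne_zero
  set m : ℕ → ℕ := fun t => (Finset.univ.filter fun i => k i = t).card with hm
  set Lc := (Finset.univ.filter (fun q : Fin n × Fin n => k q.2 < k q.1)).card with hLc
  set Uc := (Finset.univ.filter (fun q : Fin n × Fin n => k q.1 < k q.2)).card with hUc
  set D := ∑ q ∈ Finset.univ.filter (fun q : Fin n × Fin n => q.1 < q.2), (k q.2 - k q.1)
    with hD
  set S := ∑ t ∈ Finset.range N, m t * m t with hS
  set X := ∑ q ∈ Finset.univ.filter (fun q : Fin n × Fin n => k q.2 < k q.1),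
    (N - (k q.1 - k q.2)) with hX
  -- the exponent identity
  have hdle : ∀ q : Fin n × Fin n, k q.1 - k q.2 ≤ N :=
    fun q => le_of_lt (lt_of_le_of_lt (Nat.sub_le _ _) (hNk _))
  have hswap : D = ∑ q ∈ Finset.univ.filter (fun q : Fin n × Fin n => k q.2 < k q.1),
      (k q.1 - k q.2) := swap_sum k hk
  have hXD : X + D = N * Lc := by
    rw [hswap, hX, ← Finset.sum_add_distrib,
      Finset.sum_congr rfl (fun q _ => Nat.sub_add_cancel (hdle q)), Finset.sum_const,
      smul_eq_mul, hLc, mul_comm]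
  have hpart : S + Lc + Uc = n * n := partition_card k hNk
  have hE : N * S + X + N * Uc + D = N * (n * n) := by
    have h1 : N * S + X + N * Uc + D = N * S + N * Lc + N * Uc := by omega
    rw [h1, ← Nat.mul_add, ← Nat.mul_add, hpart]
  -- cast the big number
  have hfac : ∀ t ∈ Finset.range N,
      (((∏ i ∈ Finset.range (m t), (p ^ (m t) - p ^ i)) *
        (p ^ (N - 1)) ^ (m t * m t) : ℕ) : ℝ) =
      piReal p (m t) * (p : ℝ) ^ (N * (m t * m t)) := by
    intro t _
    rw [Nat.cast_mul, key_real hp (m t), Nat.cast_pow, Nat.cast_pow, ← pow_mul, mul_assoc,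
      ← pow_add]
    congr 2
    have : N = (N - 1) + 1 := (Nat.succ_pred_eq_of_pos hN).symm
    conv_rhs => rw [this]
    ring
  have hnum : (((∏ t ∈ Finset.range N,
        ((∏ i ∈ Finset.range (m t), (p ^ (m t) - p ^ i)) * (p ^ (N - 1)) ^ (m t * m t))) *
      (∏ q ∈ Finset.univ.filter (fun q : Fin n × Fin n => k q.2 < k q.1),
        p ^ (N - (k q.1 - k q.2))) * (p ^ N) ^ Uc : ℕ) : ℝ) =
      (∏ t ∈ Finset.range N, piReal p (m t)) * (p : ℝ) ^ (N * S + X + N * Uc) := by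
    rw [Nat.cast_mul, Nat.cast_mul, Nat.cast_prod, Nat.cast_prod, Nat.cast_pow, Nat.cast_pow,
      Finset.prod_congr rfl hfac, Finset.prod_mul_distrib, Finset.prod_pow_eq_pow_sum,
      ← Finset.mul_sum, ← hS]
    have hL : ∏ q ∈ Finset.univ.filter (fun q : Fin n × Fin n => k q.2 < k q.1),
        (((p ^ (N - (k q.1 - k q.2)) : ℕ)) : ℝ) = (p : ℝ) ^ X := by
      rw [Finset.prod_congr rfl (fun q _ => Nat.cast_pow p _), hX, Finset.prod_pow_eq_pow_sum]
    rw [hL, ← pow_mul, mul_assoc, ← pow_add, mul_assoc, ← pow_add]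
    congr 2
    ring
  rw [hnum]
  -- final cancellation
  have hNN : (((p : ℝ) ^ N)⁻¹) ^ (n * n) =
      ((p : ℝ) ^ (N * S + X + N * Uc) * (p : ℝ) ^ D)⁻¹ := by
    rw [inv_pow, ← pow_mul, ← hE, pow_add]
  rw [hNN, mul_inv]
  have h1 : ((p : ℝ)) ^ (N * S + X + N * Uc) ≠ 0 := pow_ne_zero _ hPne
  have h2 : ((p : ℝ)) ^ D ≠ 0 := pow_ne_zero _ hPne
  field_simp
  rw [one_div, inv_pow, mul_inv_cancel₀ h2, one_mul, hm]
/-- Lemma 2.3: for `Σ = diag(p^{k_1}, …, p^{k_n})` with `0 ≤ k_1 ≤ … ≤ k_n` and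
multiplicities `m_k = #{i : k_i = k}`, the measure of
`C_Σ = GL_n(ℤ_p) ∩ Σ GL_n(ℤ_p) Σ^{−1}` — i.e. of the set of `γ ∈ GL_n(ℤ_p)` with
`p^{k_i − k_j} ∣ γ_{ij}` for all `i > j` — equals `p^{−D(Σ)} ∏_k π_{m_k}`, where
`D(Σ) = ∑_{i<j} (k_j − k_i)`. -/
theorem stabiliser_measure
    (p : ℕ) [Fact p.Prime] (n : ℕ) (hn : 1 ≤ n)
    [MeasurableSpace ℤ_[p]] [BorelSpace ℤ_[p]]
    (ν : Measure ℤ_[p]) [ν.IsAddHaarMeasure] [IsProbabilityMeasure ν]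
    (k : Fin n → ℕ) (hk : Monotone k) :
    Measure.pi (fun _ : Fin n => Measure.pi fun _ : Fin n => ν)
      {γ : Matrix (Fin n) (Fin n) ℤ_[p] | IsUnit γ.det ∧
        ∀ i j : Fin n, j < i → (p : ℤ_[p]) ^ (k i - k j) ∣ γ i j} =
    ENNReal.ofReal
      (((p : ℝ))⁻¹ ^ (∑ q ∈ Finset.univ.filter (fun q : Fin n × Fin n => q.1 < q.2),
          (k q.2 - k q.1)) *
        ∏' t : ℕ, piReal p ((Finset.univ.filter fun i => k i = t).card)) := by
  classical
  haveI hp : Fact p.Prime := inferInstance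
  set N := (Finset.univ.sup k) + 1 with hNdef
  have hN : 1 ≤ N := Nat.le_add_left 1 _
  have hNk : ∀ i, k i < N := fun i => Nat.lt_succ_of_le (Finset.le_sup (Finset.mem_univ i))
  haveI : NeZero (p ^ N) := NeZero_ppow'
  set f : ℤ_[p] →+* ZMod (p ^ N) := PadicInt.toZModPow N with hfdef
  set F : Matrix (Fin n) (Fin n) ℤ_[p] → Matrix (Fin n) (Fin n) (ZMod (p ^ N)) :=
    fun γ => γ.map f with hFdef
  set Tset : Set (Matrix (Fin n) (Fin n) (ZMod (p ^ N))) :=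
    {A | IsUnit A.det ∧ ∀ i j : Fin n, j < i → (p : ZMod (p ^ N)) ^ (k i - k j) ∣ A i j}
    with hTset
  have hSeq : {γ : Matrix (Fin n) (Fin n) ℤ_[p] | IsUnit γ.det ∧
      ∀ i j : Fin n, j < i → (p : ℤ_[p]) ^ (k i - k j) ∣ γ i j} = F ⁻¹' Tset := by
    ext γ
    simp only [Set.mem_setOf_eq, Set.mem_preimage, hTset]
    refine and_congr ?_ ?_
    · have h1 : IsUnit γ.det ↔ IsUnit (f γ.det) := isUnit_padic_iff N hN _
      have h2 : f γ.det = (F γ).det := RingHom.map_det f γ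
      rw [h1, h2]
    · refine forall_congr' fun i => forall_congr' fun j => imp_congr_right fun _ => ?_
      exact dvd_toZModPow_iff N _ (le_of_lt (lt_of_le_of_lt (Nat.sub_le _ _) (hNk _))) (γ i j)
  refine Eq.trans (congrArg (fun s => Measure.pi (fun _ : Fin n => Measure.pi fun _ : Fin n => ν) s) hSeq) ?_
  have hfibbox : ∀ A : Matrix (Fin n) (Fin n) (ZMod (p ^ N)), F ⁻¹' {A} =
      Set.pi Set.univ (fun i => Set.pi Set.univ (fun j => f ⁻¹' {A i j})) := by
    intro A
    ext γ
    constructor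
    · intro h
      have hFA : F γ = A := h
      exact fun i _ j _ => show f (γ i j) = A i j by rw [← hFA]; rfl
    · intro h
      show F γ = A
      exact Matrix.ext fun i j => h i (Set.mem_univ i) j (Set.mem_univ j)
  have hfib_meas : ∀ A : Matrix (Fin n) (Fin n) (ZMod (p ^ N)), MeasurableSet (F ⁻¹' {A}) := by
    intro A
    rw [hfibbox]
    refine MeasurableSet.univ_pi fun i => MeasurableSet.univ_pi fun j => ?_
    rw [toZModPow_preimage_eq_ball]
    exact measurableSet_closedBall
  have hfib_val : ∀ A : Matrix (Fin n) (Fin n) (ZMod (p ^ N)),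
      Measure.pi (fun _ : Fin n => Measure.pi fun _ : Fin n => ν) (F ⁻¹' {A}) =
      (((p : ℝ≥0∞) ^ N)⁻¹) ^ (n * n) := by
    intro A
    refine Eq.trans (congrArg (fun s => Measure.pi (fun _ : Fin n => Measure.pi fun _ : Fin n => ν) s) (hfibbox A)) ?_
    rw [Measure.pi_pi]
    have hrow : ∀ i : Fin n, Measure.pi (fun _ : Fin n => ν)
        (Set.pi Set.univ fun j => f ⁻¹' {A i j}) = (((p : ℝ≥0∞) ^ N)⁻¹) ^ n := by
      intro i
      rw [Measure.pi_pi,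
        Finset.prod_congr rfl (fun j _ => measure_toZModPow_fiber ν N (A i j)),
        Finset.prod_const, Finset.card_univ, Fintype.card_fin]
    rw [Finset.prod_congr rfl (fun i _ => hrow i), Finset.prod_const, Finset.card_univ,
      Fintype.card_fin, ← pow_mul]
  have hU : F ⁻¹' Tset =
      ⋃ A : ↥Tset, F ⁻¹' {(A : Matrix (Fin n) (Fin n) (ZMod (p ^ N)))} := by
    ext γ
    simp only [Set.mem_preimage, Set.mem_iUnion, Set.mem_singleton_iff]
    constructor
    · intro h
      exact ⟨⟨F γ, h⟩, rfl⟩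
    · rintro ⟨A, hA⟩
      rw [hA]
      exact A.2
  haveI : Fintype ↥Tset := Set.Finite.fintype (Set.toFinite _)
  have hdisj : Pairwise (Function.onFun Disjoint
      fun A : ↥Tset => F ⁻¹' {(A : Matrix (Fin n) (Fin n) (ZMod (p ^ N)))}) := by
    intro A B hAB
    rw [Function.onFun, Set.disjoint_left]
    rintro γ hA hB
    simp only [Set.mem_preimage, Set.mem_singleton_iff] at hA hB
    exact hAB (Subtype.ext (hA.symm.trans hB))
  have hmeq := measure_iUnion
    (μ := Measure.pi (fun _ : Fin n => Measure.pi fun _ : Fin n => ν)) hdisj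
    (fun A => hfib_meas _)
  rw [hU]
  refine Eq.trans hmeq ?_
  rw [tsum_fintype]
  refine Eq.trans (Finset.sum_congr rfl (fun (A : ↥Tset) _ => hfib_val A.1)) ?_
  rw [Finset.sum_const, Finset.card_univ,
    nsmul_eq_mul]
  have hcardT : (Fintype.card ↥Tset : ℝ≥0∞) =
      ((((∏ t ∈ Finset.range N,
        ((∏ i ∈ Finset.range ((Finset.univ.filter fun i => k i = t).card),
            (p ^ ((Finset.univ.filter fun i => k i = t).card) - p ^ i)) *
          (p ^ (N - 1)) ^ ((Finset.univ.filter fun i => k i = t).card *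
            (Finset.univ.filter fun i => k i = t).card))) *
      (∏ q ∈ Finset.univ.filter (fun q : Fin n × Fin n => k q.2 < k q.1),
        p ^ (N - (k q.1 - k q.2))) *
      (p ^ N) ^ ((Finset.univ.filter (fun q : Fin n × Fin n => k q.1 < k q.2)).card)) : ℕ)
        : ℝ≥0∞) := by
    congr 1
    rw [← Nat.card_eq_fintype_card]
    have he : Nat.card ↥Tset = Nat.card {A : Matrix (Fin n) (Fin n) (ZMod (p ^ N)) //
        IsUnit A.det ∧ ∀ i j : Fin n, j < i → (p : ZMod (p ^ N)) ^ (k i - k j) ∣ A i j} :=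
      Nat.card_congr (Equiv.subtypeEquivRight fun A => Iff.rfl)
    rw [he, card_T k hk N hN hNk]
  rw [hcardT]
  -- convert the tprod into a finite product
  have htp : ∏' t : ℕ, piReal p ((Finset.univ.filter fun i => k i = t).card) =
      ∏ t ∈ Finset.range N, piReal p ((Finset.univ.filter fun i => k i = t).card) := by
    refine tprod_eq_prod fun t ht => ?_
    have hempty : (Finset.univ.filter fun i => k i = t) = ∅ := by
      rw [Finset.filter_eq_empty_iff]
      intro i _
      have := hNk i
      have hNt : N ≤ t := le_of_not_gt (fun hc => ht (Finset.mem_range.mpr hc))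
      omega
    rw [hempty]
    simp [piReal]
  rw [htp]
  -- move everything into ENNReal.ofReal
  have hppos : (0 : ℝ) < (p : ℝ) := by
    exact_mod_cast hp.out.pos
  have hx : ((p : ℝ≥0∞) ^ N)⁻¹ = ENNReal.ofReal (((p : ℝ) ^ N)⁻¹) := by
    rw [ENNReal.ofReal_inv_of_pos (by positivity), ENNReal.ofReal_pow (le_of_lt hppos),
      ENNReal.ofReal_natCast]
  rw [hx, ← ENNReal.ofReal_pow (by positivity), ← ENNReal.ofReal_natCast
    ((∏ t ∈ Finset.range N,
        ((∏ i ∈ Finset.range ((Finset.univ.filter fun i => k i = t).card),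
            (p ^ ((Finset.univ.filter fun i => k i = t).card) - p ^ i)) *
          (p ^ (N - 1)) ^ ((Finset.univ.filter fun i => k i = t).card *
            (Finset.univ.filter fun i => k i = t).card))) *
      (∏ q ∈ Finset.univ.filter (fun q : Fin n × Fin n => k q.2 < k q.1),
        p ^ (N - (k q.1 - k q.2))) *
      (p ^ N) ^ ((Finset.univ.filter (fun q : Fin n × Fin n => k q.1 < k q.2)).card)),
    ← ENNReal.ofReal_mul (Nat.cast_nonneg _)]
  exact congrArg ENNReal.ofReal (final_real hp k hk N hN hNk)
end

section
/- Let p be an odd prime, n ≥ 1, k ≥ 1, and let a be an integer coprime to p. Let S_k denote the n×n diagonal matrix over ℤ/p^kℤ with diagonal entries (1, …, 1, a mod p^k), and S_1 the corresponding matrix over ℤ/pℤ. Then the number of n×n matrices U over ℤ/p^kℤ satisfying U S_k Uᵀ = S_k equals p^{(k−1)n(n−1)/2} times the number of n×n matrices U over ℤ/pℤ satisfying U S_1 Uᵀ = S_1. Consequently the density |{U : U S_k Uᵀ = S_k}| / p^{k n(n−1)/2} is independent of k. -/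
open Matrix

section SkewCount
variable {p : ℕ} [hpf : Fact p.Prime]

lemma two_ne_zero_zmod (hp2 : p ≠ 2) : (2 : ZMod p) ≠ 0 := by
  haveI : NeZero p := ⟨hpf.out.ne_zero⟩
  intro h
  have h2 : ((2 : ℕ) : ZMod p) = 0 := by exact_mod_cast h
  rw [ZMod.natCast_eq_zero_iff] at h2
  exact hp2 ((Nat.prime_dvd_prime_iff_eq hpf.out Nat.prime_two).mp h2)

lemma card_symm_eq (hp2 : p ≠ 2) (n : ℕ) (C : Matrix (Fin n) (Fin n) (ZMod p))
    (hC : Cᵀ = C) :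
    Nat.card {Y : Matrix (Fin n) (Fin n) (ZMod p) // Y + Yᵀ = C} = p ^ (n * (n - 1) / 2) := by
  haveI : NeZero p := ⟨hpf.out.ne_zero⟩
  have h2 : (2 : ZMod p) ≠ 0 := two_ne_zero_zmod hp2
  have hCsymm : ∀ i j, C j i = C i j := fun i j => by
    simpa using congrFun (congrFun hC i) j
  let e : {Y : Matrix (Fin n) (Fin n) (ZMod p) // Y + Yᵀ = C} ≃
      ((i : Fin n) → Fin (i : ℕ) → ZMod p) :=
    { toFun := fun Y i j => Y.1 i ⟨j, j.2.trans i.2⟩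
      invFun := fun f =>
        ⟨fun i j =>
          if h : (j : ℕ) < (i : ℕ) then f i ⟨j, h⟩
          else if h' : (i : ℕ) < (j : ℕ) then C i j - f j ⟨i, h'⟩
          else (2⁻¹ : ZMod p) * C i j, by
          ext i j
          erw [Matrix.add_apply, transpose_apply]; beta_reduce
          rcases lt_trichotomy (j : ℕ) (i : ℕ) with h | h | h
          · rw [dif_pos h, dif_neg (by omega), dif_pos h, hCsymm i j]; ring
          · have hij : i = j := Fin.ext (by omega)
            subst hij
            rw [dif_neg (by omega), dif_neg (by omega)]
            rw [← two_mul, ← mul_assoc, mul_inv_cancel₀ h2, one_mul]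
          · rw [dif_neg (by omega), dif_pos h, dif_pos h]; ring⟩
      left_inv := by
        rintro ⟨Y, hY⟩
        have hY' : ∀ i j, Y i j + Y j i = C i j := fun i j => by
          simpa using congrFun (congrFun hY i) j
        ext i j
        simp only
        rcases lt_trichotomy (j : ℕ) (i : ℕ) with h | h | h
        · rw [dif_pos h]
        · have hij : i = j := Fin.ext (by omega)
          subst hij
          rw [dif_neg (by omega), dif_neg (by omega)]
          have h22 : (2 : ZMod p) * Y i i = C i i := by linear_combination hY' i i
          rw [← h22, ← mul_assoc, inv_mul_cancel₀ h2, one_mul]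
        · rw [dif_neg (by omega), dif_pos h]
          simp only [Fin.eta]
          linear_combination -(hY' i j)
      right_inv := by
        intro f
        ext i j
        simp only [dif_pos j.2] }
  rw [Nat.card_congr e, Nat.card_eq_fintype_card, Fintype.card_pi]
  have hc : ∀ i : Fin n, Fintype.card (Fin (i : ℕ) → ZMod p) = p ^ (i : ℕ) := by
    intro i; rw [Fintype.card_fun, ZMod.card, Fintype.card_fin]
  rw [Finset.prod_congr rfl (fun i _ => hc i), Finset.prod_pow_eq_pow_sum]
  congr 1
  rw [Fin.sum_univ_eq_sum_range (fun i => i) n, Finset.sum_range_id]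

end SkewCount
open Matrix

section ZModPrim
variable {p : ℕ} [hpf : Fact p.Prime] {k : ℕ}

private lemma hmodp (k m : ℕ) :
    ((p ^ k * (m % p) : ℕ) : ZMod (p ^ (k + 1))) = ((p ^ k * m : ℕ) : ZMod (p ^ (k + 1))) := by
  haveI : NeZero (p ^ (k+1)) := ⟨pow_ne_zero _ hpf.out.ne_zero⟩
  rw [ZMod.natCast_eq_natCast_iff, pow_succ]
  exact Nat.ModEq.mul_left' (c := p ^ k) (Nat.mod_modEq m p)

private lemma hcancel (k : ℕ) (x y : ZMod p)
    (h : ((p ^ k * x.val : ℕ) : ZMod (p ^ (k + 1))) = ((p ^ k * y.val : ℕ) : ZMod (p ^ (k + 1)))) :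
    x = y := by
  haveI : NeZero (p ^ (k+1)) := ⟨pow_ne_zero _ hpf.out.ne_zero⟩
  haveI : NeZero p := ⟨hpf.out.ne_zero⟩
  rw [ZMod.natCast_eq_natCast_iff] at h
  have hK : 0 < p ^ k := Nat.pow_pos hpf.out.pos
  have hx : p ^ k * x.val < p ^ (k + 1) := by
    rw [pow_succ]; exact (Nat.mul_lt_mul_left hK).mpr (ZMod.val_lt x)
  have hy : p ^ k * y.val < p ^ (k + 1) := by
    rw [pow_succ]; exact (Nat.mul_lt_mul_left hK).mpr (ZMod.val_lt y)
  have h2 := h.eq_of_lt_of_lt hx hy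
  exact ZMod.val_injective _ (Nat.eq_of_mul_eq_mul_left hK h2)

end ZModPrim

section ZModPrim2
variable {p : ℕ} [hpf : Fact p.Prime] {k : ℕ}

private lemma natval {N : ℕ} [NeZero N] (z : ZMod N) : ((z.val : ℕ) : ZMod N) = z := by
  simp [ZMod.natCast_val, ZMod.cast_id]

private lemma hKK (hk : 1 ≤ k) :
    ((p ^ k : ℕ) : ZMod (p ^ (k + 1))) * ((p ^ k : ℕ) : ZMod (p ^ (k + 1))) = 0 := by
  haveI : NeZero (p ^ (k+1)) := ⟨pow_ne_zero _ hpf.out.ne_zero⟩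
  rw [← Nat.cast_mul, ZMod.natCast_eq_zero_iff, ← pow_add]
  exact pow_dvd_pow p (by omega)

private lemma hdvd (z : ZMod (p ^ (k + 1))) (h : (z.val : ZMod (p ^ k)) = 0) :
    z = ((p ^ k : ℕ) : ZMod (p ^ (k + 1))) * ((z.val / p ^ k : ℕ) : ZMod (p ^ (k + 1))) := by
  haveI : NeZero (p ^ (k+1)) := ⟨pow_ne_zero _ hpf.out.ne_zero⟩
  haveI : NeZero (p ^ k) := ⟨pow_ne_zero _ hpf.out.ne_zero⟩
  rw [ZMod.natCast_eq_zero_iff] at h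
  rw [← Nat.cast_mul, Nat.mul_div_cancel' h, natval]

private lemma hsplit (x : ZMod (p ^ (k + 1))) :
    ((p ^ k : ℕ) : ZMod (p ^ (k + 1))) * x
      = ((p ^ k : ℕ) : ZMod (p ^ (k + 1))) * ((x.val % p : ℕ) : ZMod (p ^ (k + 1))) := by
  haveI : NeZero (p ^ (k+1)) := ⟨pow_ne_zero _ hpf.out.ne_zero⟩
  conv_lhs => rw [← natval x]
  rw [← Nat.cast_mul, ← Nat.cast_mul, hmodp]

private lemma hiff (x y : ZMod (p ^ (k + 1))) :
    ((p ^ k : ℕ) : ZMod (p ^ (k + 1))) * x = ((p ^ k : ℕ) : ZMod (p ^ (k + 1))) * y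
      ↔ ((x.val : ZMod p) = (y.val : ZMod p)) := by
  haveI : NeZero (p ^ (k+1)) := ⟨pow_ne_zero _ hpf.out.ne_zero⟩
  haveI : NeZero p := ⟨hpf.out.ne_zero⟩
  rw [hsplit x, hsplit y]
  constructor
  · intro h
    have hx : (x.val % p : ℕ) = ((x.val : ZMod p)).val := (ZMod.val_natCast _ _).symm
    have hy : (y.val % p : ℕ) = ((y.val : ZMod p)).val := (ZMod.val_natCast _ _).symm
    rw [hx, hy] at h
    exact hcancel k _ _ (by exact_mod_cast h)
  · intro h
    have : x.val % p = y.val % p := by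
      have := congrArg ZMod.val h
      rwa [ZMod.val_natCast, ZMod.val_natCast] at this
    rw [this]

private lemma hlv (hk : 1 ≤ k) (t : ZMod p) :
    ((((((p ^ k : ℕ) : ZMod (p ^ (k + 1))) * ((t.val : ℕ) : ZMod (p ^ (k + 1)))).val / p ^ k : ℕ))
      : ZMod p) = t := by
  haveI : NeZero (p ^ (k+1)) := ⟨pow_ne_zero _ hpf.out.ne_zero⟩
  haveI : NeZero p := ⟨hpf.out.ne_zero⟩
  have hK : 0 < p ^ k := Nat.pow_pos hpf.out.pos
  rw [← Nat.cast_mul, ZMod.val_natCast, Nat.mod_eq_of_lt (by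
    rw [pow_succ]; exact (Nat.mul_lt_mul_left hK).mpr (ZMod.val_lt t))]
  rw [Nat.mul_div_cancel_left _ hK, natval]

end ZModPrim2

private def Sd (n m : ℕ) (a : ℤ) : Matrix (Fin n) (Fin n) (ZMod m) :=
  Matrix.diagonal (fun i : Fin n => if (i : ℕ) = n - 1 then (a : ZMod m) else 1)

private lemma Sd_map {n m m' : ℕ} (a : ℤ) (f : ZMod m →+* ZMod m') :
    (Sd n m a).map f = Sd n m' a := by
  unfold Sd
  rw [Matrix.diagonal_map (map_zero f)]
  congr 1; funext i
  simp only [Function.comp_apply, apply_ite f, map_intCast, _root_.map_one]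

private lemma Sd_transpose {n m : ℕ} (a : ℤ) : (Sd n m a)ᵀ = Sd n m a :=
  Matrix.diagonal_transpose _

private lemma Sd_det {n : ℕ} (hn : 1 ≤ n) (a : ℤ) (m : ℕ) :
    (Sd n m a).det = (a : ZMod m) := by
  unfold Sd
  rw [Matrix.det_diagonal]
  have h1 : (fun i : Fin n => if (i : ℕ) = n - 1 then (a : ZMod m) else 1)
      = fun i : Fin n => if i = (⟨n - 1, by omega⟩ : Fin n) then (a : ZMod m) else 1 := by
    funext i
    exact if_congr (by simp [Fin.ext_iff]) rfl rfl
  rw [h1, Finset.prod_ite_eq' Finset.univ (⟨n - 1, by omega⟩ : Fin n) (fun _ => (a : ZMod m))]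
  simp

private lemma aunit {p : ℕ} [Fact p.Prime] (a : ℤ) (ha : IsCoprime a (p : ℤ)) :
    IsUnit (a : ZMod p) := by
  obtain ⟨u, v, h⟩ := ha
  apply IsUnit.of_mul_eq_one (b := (u : ZMod p))
  have := congrArg (fun z : ℤ => (z : ZMod p)) h
  push_cast at this
  rw [ZMod.natCast_self] at this
  simpa [mul_comm] using this

section Step
variable {p : ℕ} [hpf : Fact p.Prime]

private lemma step_card (hp2 : p ≠ 2) (n k : ℕ) (hn : 1 ≤ n) (hk : 1 ≤ k)
    (a : ℤ) (ha : IsCoprime a (p : ℤ)) :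
    Nat.card {U : Matrix (Fin n) (Fin n) (ZMod (p ^ (k + 1))) //
        U * Sd n (p ^ (k + 1)) a * Uᵀ = Sd n (p ^ (k + 1)) a}
      = p ^ (n * (n - 1) / 2) *
        Nat.card {U : Matrix (Fin n) (Fin n) (ZMod (p ^ k)) //
          U * Sd n (p ^ k) a * Uᵀ = Sd n (p ^ k) a} := by
  haveI : NeZero (p ^ (k + 1)) := ⟨pow_ne_zero _ hpf.out.ne_zero⟩
  haveI : NeZero (p ^ k) := ⟨pow_ne_zero _ hpf.out.ne_zero⟩
  haveI : NeZero p := ⟨hpf.out.ne_zero⟩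
  let π : ZMod (p ^ (k + 1)) →+* ZMod (p ^ k) :=
    ZMod.castHom (pow_dvd_pow p (Nat.le_succ k)) (ZMod (p ^ k))
  let π₀ : ZMod (p ^ k) →+* ZMod p := ZMod.castHom (dvd_pow_self p (by omega : k ≠ 0)) (ZMod p)
  let πF : ZMod (p ^ (k + 1)) →+* ZMod p :=
    ZMod.castHom (dvd_pow_self p (by omega : k + 1 ≠ 0)) (ZMod p)
  have hπ : ∀ z : ZMod (p ^ (k + 1)), π z = ((z.val : ℕ) : ZMod (p ^ k)) := fun z => by
    rw [ZMod.castHom_apply, ZMod.cast_eq_val]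
  have hπ₀ : ∀ z : ZMod (p ^ k), π₀ z = ((z.val : ℕ) : ZMod p) := fun z => by
    rw [ZMod.castHom_apply, ZMod.cast_eq_val]
  have hπF : ∀ z : ZMod (p ^ (k + 1)), πF z = ((z.val : ℕ) : ZMod p) := fun z => by
    rw [ZMod.castHom_apply, ZMod.cast_eq_val]
  let lF : ZMod p → ZMod (p ^ (k + 1)) := fun t => ((t.val : ℕ) : ZMod (p ^ (k + 1)))
  let K : ZMod (p ^ (k + 1)) := ((p ^ k : ℕ) : ZMod (p ^ (k + 1)))
  have hπlF : ∀ t : ZMod p, πF (lF t) = t := fun t => by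
    show πF ((t.val : ℕ) : ZMod (p ^ (k + 1))) = t
    rw [map_natCast πF]; exact natval t
  have hπK : π K = 0 := by
    show π ((p ^ k : ℕ) : ZMod (p ^ (k + 1))) = 0
    rw [map_natCast π]; exact ZMod.natCast_self _
  have hKiff : ∀ x y : ZMod (p ^ (k + 1)), K * x = K * y ↔ πF x = πF y := fun x y => by
    rw [hπF, hπF]; exact hiff x y
  have redprop : ∀ V : Matrix (Fin n) (Fin n) (ZMod (p ^ (k + 1))),
      V * Sd n (p ^ (k + 1)) a * Vᵀ = Sd n (p ^ (k + 1)) a →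
      (V.map π) * Sd n (p ^ k) a * (V.map π)ᵀ = Sd n (p ^ k) a := by
    intro V hV
    have := congrArg (fun M : Matrix (Fin n) (Fin n) (ZMod (p ^ (k + 1))) => M.map π) hV
    simpa [Matrix.map_mul, Matrix.transpose_map, Sd_map a π] using this
  let red : {U : Matrix (Fin n) (Fin n) (ZMod (p ^ (k + 1))) //
        U * Sd n (p ^ (k + 1)) a * Uᵀ = Sd n (p ^ (k + 1)) a} →
      {U : Matrix (Fin n) (Fin n) (ZMod (p ^ k)) //
        U * Sd n (p ^ k) a * Uᵀ = Sd n (p ^ k) a} :=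
    fun V => ⟨V.1.map π, redprop V.1 V.2⟩
  have key : ∀ u, Nat.card {v // red v = u} = p ^ (n * (n - 1) / 2) := by
    rintro ⟨U, hU⟩
    -- the entrywise lift of U
    let A : Matrix (Fin n) (Fin n) (ZMod (p ^ (k + 1))) :=
      U.map (fun x => ((x.val : ℕ) : ZMod (p ^ (k + 1))))
    have hA : A.map π = U := by
      ext i j
      show π ((((U i j).val : ℕ)) : ZMod (p ^ (k + 1))) = U i j
      rw [map_natCast π, natval]
    let Ub : Matrix (Fin n) (Fin n) (ZMod p) := U.map π₀
    have hAF : A.map πF = Ub := by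
      ext i j
      show πF ((((U i j).val : ℕ)) : ZMod (p ^ (k + 1))) = π₀ (U i j)
      rw [map_natCast πF, hπ₀]
    -- the defect matrix and its division by p^k
    let D : Matrix (Fin n) (Fin n) (ZMod (p ^ (k + 1))) :=
      A * Sd n (p ^ (k + 1)) a * Aᵀ - Sd n (p ^ (k + 1)) a
    have hDred : ∀ i j, π (D i j) = 0 := by
      intro i j
      have hDmap : D.map π = 0 := by
        have h0 : (A.map π) * Sd n (p ^ k) a * (A.map π)ᵀ - Sd n (p ^ k) a = 0 := by
          rw [hA, hU, sub_self]
        simpa [D, Matrix.map_sub, Matrix.map_mul, Matrix.transpose_map, Sd_map a π] using h0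
      have := congrFun (congrFun hDmap i) j
      simpa using this
    have hDsymm : ∀ i j, D j i = D i j := by
      intro i j
      have hDt : Dᵀ = D := by
        simp only [D, transpose_sub, transpose_mul, transpose_transpose, Sd_transpose,
          mul_assoc]
      have := congrFun (congrFun hDt i) j
      simpa using this
    let dv : ZMod (p ^ (k + 1)) → ZMod p := fun z => ((z.val / p ^ k : ℕ) : ZMod p)
    let E : Matrix (Fin n) (Fin n) (ZMod p) := D.map dv
    have hEsymm : Eᵀ = E := by
      ext i j
      show dv (D j i) = dv (D i j)
      rw [hDsymm i j]
    have hDval0 : ∀ z : ZMod (p ^ (k + 1)), π z = 0 → ((z.val : ℕ) : ZMod (p ^ k)) = 0 :=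
      fun z hz => by rw [← hπ]; exact hz
    have hKlf : ∀ z : ZMod (p ^ (k + 1)), π z = 0 → K * lF (dv z) = z := by
      intro z hz
      have h3 : lF (dv z) = ((z.val / p ^ k % p : ℕ) : ZMod (p ^ (k + 1))) :=
        congrArg (Nat.cast) (ZMod.val_natCast _ _)
      have hq : (((p ^ k : ℕ) : ZMod (p ^ (k + 1))) *
          ((z.val / p ^ k % p : ℕ) : ZMod (p ^ (k + 1)))) = z := by
        rw [← Nat.cast_mul, hmodp, Nat.cast_mul, ← hdvd z (hDval0 z hz)]
      exact (congrArg (fun t => ((p ^ k : ℕ) : ZMod (p ^ (k + 1))) * t) h3).trans hq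
    have hE : ∀ i j, D i j = K * lF (E i j) :=
      fun i j => (hKlf (D i j) (hDred i j)).symm
    -- invertibility mod p
    have hUb : Ub * Sd n p a * Ubᵀ = Sd n p a := by
      have := congrArg (fun M : Matrix (Fin n) (Fin n) (ZMod (p ^ k)) => M.map π₀) hU
      simpa [Matrix.map_mul, Matrix.transpose_map, Sd_map a π₀] using this
    have hUF : IsUnit Ub.det := by
      have hdet := congrArg Matrix.det hUb
      rw [det_mul, det_mul, det_transpose, Sd_det hn] at hdet
      have haF : IsUnit ((a : ZMod p)) := aunit a ha
      rw [← hdet] at haF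
      exact isUnit_of_mul_isUnit_left (isUnit_of_mul_isUnit_left haF)
    have hT : IsUnit (Sd n p a * Ubᵀ) := by
      rw [Matrix.isUnit_iff_isUnit_det, det_mul, det_transpose, Sd_det hn]
      exact (aunit a ha).mul hUF
    -- parametrization of the lifts of U
    let g : Matrix (Fin n) (Fin n) (ZMod p) ≃
        {V : Matrix (Fin n) (Fin n) (ZMod (p ^ (k + 1))) // V.map π = U} :=
      { toFun := fun W => ⟨A + K • W.map lF, by
          ext i j
          have hAij : π (A i j) = U i j := congrFun (congrFun hA i) j
          show π (A i j + K * lF (W i j)) = U i j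
          rw [map_add, _root_.map_mul, hπK, zero_mul, add_zero, hAij]⟩
        invFun := fun V => (V.1 - A).map dv
        left_inv := fun W => by
          ext i j
          show dv (A i j + K * lF (W i j) - A i j) = W i j
          rw [add_sub_cancel_left]
          exact hlv hk (W i j)
        right_inv := fun V => by
          obtain ⟨V, hV⟩ := V
          apply Subtype.ext
          ext i j
          show A i j + K * lF (dv (V i j - A i j)) = V i j
          have hπV : π (V i j) = U i j := congrFun (congrFun hV i) j
          have hπA : π (A i j) = U i j := congrFun (congrFun hA i) j
          have hz : π (V i j - A i j) = 0 := by rw [map_sub, hπV, hπA, sub_self]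
          rw [hKlf _ hz]
          ring }
    -- the orthogonality condition in the chart g
    have hBmap : ∀ W : Matrix (Fin n) (Fin n) (ZMod p), (W.map lF).map πF = W := fun W => by
      ext i j; exact hπlF (W i j)
    have hcond : ∀ W : Matrix (Fin n) (Fin n) (ZMod p),
        ((A + K • W.map lF) * Sd n (p ^ (k + 1)) a * (A + K • W.map lF)ᵀ
          = Sd n (p ^ (k + 1)) a)
        ↔ W * Sd n p a * Ubᵀ + Ub * Sd n p a * Wᵀ = -E := by
      intro W
      set B := W.map lF with hB
      set S := Sd n (p ^ (k + 1)) a with hS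
      have hKK' : K * K = 0 := hKK hk
      have expand : (A + K • B) * S * (A + K • B)ᵀ
          = A * S * Aᵀ + K • (B * S * Aᵀ + A * S * Bᵀ) := by
        rw [transpose_add, transpose_smul]
        simp only [add_mul, mul_add, smul_mul_assoc, mul_smul_comm, smul_smul, hKK',
          zero_smul, add_zero, smul_add]
        abel
      have hMmap : (B * S * Aᵀ + A * S * Bᵀ).map πF
          = W * Sd n p a * Ubᵀ + Ub * Sd n p a * Wᵀ := by
        simp [Matrix.map_add, Matrix.map_mul, Matrix.transpose_map, hS, Sd_map a πF,
          hBmap, hAF, hB]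
      have entry : ∀ i j,
          ((A * S * Aᵀ) i j + K * (B * S * Aᵀ + A * S * Bᵀ) i j = S i j)
          ↔ ((W * Sd n p a * Ubᵀ + Ub * Sd n p a * Wᵀ) i j = (-E) i j) := by
        intro i j
        have h1 : ∀ x, (A * S * Aᵀ) i j + x = S i j ↔ x = -(D i j) := by
          intro x
          have hD' : D i j = (A * S * Aᵀ) i j - S i j := rfl
          constructor <;> intro h
          · rw [hD']; linear_combination h
          · rw [hD'] at h; linear_combination h
        rw [h1, hE i j, ← mul_neg, hKiff, map_neg, hπlF]
        have hMij : πF ((B * S * Aᵀ + A * S * Bᵀ) i j)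
            = (W * Sd n p a * Ubᵀ + Ub * Sd n p a * Wᵀ) i j :=
          congrFun (congrFun hMmap i) j
        rw [hMij, Matrix.neg_apply]
      rw [expand]
      constructor
      · intro h
        ext i j
        apply (entry i j).mp
        have := congrFun (congrFun h i) j
        simpa only [Matrix.add_apply, Matrix.smul_apply, smul_eq_mul] using this
      · intro h
        ext i j
        have h2 := (entry i j).mpr (congrFun (congrFun h i) j)
        simpa only [Matrix.add_apply, Matrix.smul_apply, smul_eq_mul] using h2
    -- assemble the fiber equivalence
    let t : (Matrix (Fin n) (Fin n) (ZMod p))ˣ := hT.unit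
    let P : Matrix (Fin n) (Fin n) (ZMod (p ^ (k + 1))) → Prop := fun V => V.map π = U
    let Q : Matrix (Fin n) (Fin n) (ZMod (p ^ (k + 1))) → Prop :=
      fun V => V * Sd n (p ^ (k + 1)) a * Vᵀ = Sd n (p ^ (k + 1)) a
    have e0 : {v // red v = ⟨U, hU⟩} ≃ {V // P V ∧ Q V} :=
      { toFun := fun v => ⟨v.1.1, ⟨congrArg Subtype.val v.2, v.1.2⟩⟩
        invFun := fun V => ⟨⟨V.1, V.2.2⟩, Subtype.ext V.2.1⟩
        left_inv := fun v => Subtype.ext (Subtype.ext rfl)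
        right_inv := fun V => Subtype.ext rfl }
    have e1 : {V // P V ∧ Q V} ≃ {x : {V // P V} // Q x.1} :=
      (Equiv.subtypeSubtypeEquivSubtypeInter P Q).symm
    have e2 : {x : {V // P V} // Q x.1} ≃ {W : Matrix (Fin n) (Fin n) (ZMod p) // Q (g W).1} :=
      (Equiv.subtypeEquiv g (fun W => Iff.rfl)).symm
    have e3 : {W : Matrix (Fin n) (Fin n) (ZMod p) // Q (g W).1} ≃
        {W : Matrix (Fin n) (Fin n) (ZMod p) //
          W * Sd n p a * Ubᵀ + Ub * Sd n p a * Wᵀ = -E} :=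
      Equiv.subtypeEquivRight (fun W => hcond W)
    have e4 : {W : Matrix (Fin n) (Fin n) (ZMod p) //
          W * Sd n p a * Ubᵀ + Ub * Sd n p a * Wᵀ = -E} ≃
        {Y : Matrix (Fin n) (Fin n) (ZMod p) // Y + Yᵀ = -E} := by
      refine Equiv.subtypeEquiv (Units.mulRight t) (fun W => ?_)
      have ht' : (t : Matrix (Fin n) (Fin n) (ZMod p)) = Sd n p a * Ubᵀ := hT.unit_spec
      have harr : Units.mulRight t W = W * (Sd n p a * Ubᵀ) := by
        rw [← ht']; rfl
      rw [harr, transpose_mul, transpose_mul, transpose_transpose, Sd_transpose,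
        ← mul_assoc]
    have efin := (((e0.trans e1).trans e2).trans e3).trans e4
    rw [Nat.card_congr efin]
    exact card_symm_eq hp2 n (-E) (by rw [transpose_neg, hEsymm])
  classical
  rw [Nat.card_congr (Equiv.sigmaFiberEquiv red).symm, Nat.card_eq_fintype_card,
    Fintype.card_sigma]
  have hfib : ∀ u, Fintype.card {v // red v = u} = p ^ (n * (n - 1) / 2) := fun u => by
    rw [← Nat.card_eq_fintype_card]; exact key u
  rw [Finset.sum_congr rfl (fun u _ => hfib u), Finset.sum_const, Finset.card_univ,
    smul_eq_mul, ← Nat.card_eq_fintype_card, Nat.mul_comm]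

end Step

private noncomputable def cnt (p n : ℕ) (a : ℤ) (m : ℕ) : ℕ :=
  Nat.card {U : Matrix (Fin n) (Fin n) (ZMod m) // U * Sd n m a * Uᵀ = Sd n m a}

private lemma count_pow {p : ℕ} [hpf : Fact p.Prime] (hp2 : p ≠ 2) (n : ℕ) (hn : 1 ≤ n)
    (a : ℤ) (ha : IsCoprime a (p : ℤ)) (k : ℕ) (hk : 1 ≤ k) :
    cnt p n a (p ^ k)
      = p ^ ((k - 1) * (n * (n - 1) / 2)) * cnt p n a p := by
  induction k, hk using Nat.le_induction with
  | base => rw [pow_one]; simp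
  | succ k hk ih =>
    have hs : cnt p n a (p ^ (k + 1)) = p ^ (n * (n - 1) / 2) * cnt p n a (p ^ k) :=
      step_card hp2 n k hn hk a ha
    rw [hs, ih, ← mul_assoc, ← pow_add]
    congr 2
    have h1 : (k - 1) + 1 = k := Nat.sub_add_cancel hk
    have h2 : k + 1 - 1 = k := rfl
    rw [h2]
    calc n * (n - 1) / 2 + (k - 1) * (n * (n - 1) / 2)
        = ((k - 1) + 1) * (n * (n - 1) / 2) := by ring
      _ = k * (n * (n - 1) / 2) := by rw [h1]

/-- Lemma 3.3 (lifting orthogonal groups): for `p` an odd prime, `n ≥ 1`, `k ≥ 1` and `a`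
an integer coprime to `p`, letting `S` be the diagonal matrix `diag(1, …, 1, a)` over
`ℤ/p^kℤ` (resp. over `ℤ/pℤ`), the number of solutions of `U S Uᵀ = S` over `ℤ/p^kℤ` equals
`p^{(k−1)n(n−1)/2}` times the number of solutions over `ℤ/pℤ`; consequently the density
`#{U : U S Uᵀ = S} / p^{k·n(n−1)/2}` is independent of `k`. -/
theorem orthogonal_group_lifting
    (p : ℕ) [Fact p.Prime] (hp : p ≠ 2) (n k : ℕ) (hn : 1 ≤ n) (hk : 1 ≤ k)
    (a : ℤ) (ha : IsCoprime a (p : ℤ)) :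
    (Nat.card {U : Matrix (Fin n) (Fin n) (ZMod (p ^ k)) //
        U * Matrix.diagonal (fun i : Fin n => if (i : ℕ) = n - 1 then (a : ZMod (p ^ k)) else 1) * Uᵀ =
          Matrix.diagonal (fun i : Fin n => if (i : ℕ) = n - 1 then (a : ZMod (p ^ k)) else 1)}) =
      p ^ ((k - 1) * (n * (n - 1) / 2)) *
        Nat.card {U : Matrix (Fin n) (Fin n) (ZMod p) //
          U * Matrix.diagonal (fun i : Fin n => if (i : ℕ) = n - 1 then (a : ZMod p) else 1) * Uᵀ =
            Matrix.diagonal (fun i : Fin n => if (i : ℕ) = n - 1 then (a : ZMod p) else 1)} ∧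
    ((Nat.card {U : Matrix (Fin n) (Fin n) (ZMod (p ^ k)) //
        U * Matrix.diagonal (fun i : Fin n => if (i : ℕ) = n - 1 then (a : ZMod (p ^ k)) else 1) * Uᵀ =
          Matrix.diagonal (fun i : Fin n => if (i : ℕ) = n - 1 then (a : ZMod (p ^ k)) else 1)} : ℝ) /
        (p : ℝ) ^ (k * (n * (n - 1) / 2)) =
      (Nat.card {U : Matrix (Fin n) (Fin n) (ZMod p) //
        U * Matrix.diagonal (fun i : Fin n => if (i : ℕ) = n - 1 then (a : ZMod p) else 1) * Uᵀ =
          Matrix.diagonal (fun i : Fin n => if (i : ℕ) = n - 1 then (a : ZMod p) else 1)} : ℝ) /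
        (p : ℝ) ^ (n * (n - 1) / 2)) := by
  have h1 : cnt p n a (p ^ k) = p ^ ((k - 1) * (n * (n - 1) / 2)) * cnt p n a p :=
    count_pow hp n hn a ha k hk
  refine ⟨h1, ?_⟩
  show ((cnt p n a (p ^ k) : ℕ) : ℝ) / (p : ℝ) ^ (k * (n * (n - 1) / 2))
    = ((cnt p n a p : ℕ) : ℝ) / (p : ℝ) ^ (n * (n - 1) / 2)
  have hp0 : (p : ℝ) ≠ 0 := Nat.cast_ne_zero.mpr (Fact.out (p := p.Prime)).ne_zero
  have hkc : k * (n * (n - 1) / 2) = (k - 1) * (n * (n - 1) / 2) + n * (n - 1) / 2 := by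
    have h2 : (k - 1) + 1 = k := Nat.sub_add_cancel hk
    calc k * (n * (n - 1) / 2) = ((k - 1) + 1) * (n * (n - 1) / 2) := by rw [h2]
      _ = (k - 1) * (n * (n - 1) / 2) + n * (n - 1) / 2 := by ring
  rw [h1, hkc, pow_add, Nat.cast_mul, Nat.cast_pow]
  rw [mul_div_mul_left _ _ (pow_ne_zero _ hp0)]
end
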